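/- Let 0 < α < 1, η ≥ 0, λ ∈ ℝ with |λ| + η > 0, and let f, V be complex numbers and φ : ℝ → ℂ measurable satisfying |ξ|^((2α−1)/2) |V| ≤ (|λ| + ξ² + η)|φ(ξ)| + |f(ξ)| for a.e. ξ. Then c₁(|λ|+η)^(α/2−5/4) |V| ≤ √(π/2)(|λ|+η)^(−3/4) (∫_ℝ |ξ φ(ξ)|² dξ)^(1/2) + (√π/4)(|λ|+η)^(−5/4) (∫_ℝ |f(ξ)|² dξ)^(1/2), where c₁ = ∫_1^∞ (y−1)^(α/2−1/4)/y² dy. -/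

import Mathlib

open MeasureTheory Real Filter Set

lemma aux_inv_le (x : ℝ) : ((1 + x ^ 2)⁻¹) ≤ 1 := by
  rw [inv_le_one_iff₀]; right; nlinarith [sq_nonneg x]

lemma integrable_base : Integrable (fun x : ℝ => (1 + x ^ 2)⁻¹) := by
  simpa using integrable_inv_one_add_sq

lemma cont_sq_inv : Continuous (fun x : ℝ => ((1 + x ^ 2)⁻¹) ^ 2) := by
  refine (Continuous.inv₀ (by continuity) fun x => by positivity).pow 2

lemma integrable_sq_inv : Integrable (fun x : ℝ => ((1 + x ^ 2)⁻¹) ^ 2) := by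
  refine integrable_base.mono' cont_sq_inv.aestronglyMeasurable ?_
  filter_upwards with x
  have h : (0:ℝ) < 1 + x ^ 2 := by positivity
  rw [Real.norm_eq_abs, abs_of_nonneg (by positivity)]
  nlinarith [aux_inv_le x, inv_nonneg.mpr h.le]

lemma cont_x2_inv4 : Continuous (fun x : ℝ => x ^ 2 * ((1 + x ^ 2)⁻¹) ^ 4) :=
  (continuous_pow 2).mul ((Continuous.inv₀ (by continuity) fun x => by positivity).pow 4)

lemma integrable_x2_inv4 : Integrable (fun x : ℝ => x ^ 2 * ((1 + x ^ 2)⁻¹) ^ 4) := by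
  refine integrable_base.mono' cont_x2_inv4.aestronglyMeasurable ?_
  filter_upwards with x
  have h : (0:ℝ) < 1 + x ^ 2 := by positivity
  have h4 : (0:ℝ) < (1 + x ^ 2) ^ 4 := by positivity
  rw [Real.norm_eq_abs, abs_of_nonneg (by positivity)]
  rw [show ((1 + x^2)⁻¹)^4 = ((1+x^2)^4)⁻¹ by rw [inv_pow]]
  rw [← div_eq_mul_inv, inv_eq_one_div, div_le_div_iff₀ h4 h]
  nlinarith [sq_nonneg x, sq_nonneg (x^2), sq_nonneg (1+x^2), pow_le_pow_right₀ (by nlinarith [sq_nonneg x] : (1:ℝ) ≤ 1+x^2) (by norm_num : 1 ≤ 4)]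

lemma tendsto_ratfun_top : Tendsto (fun x : ℝ => x / (1 + x ^ 2)) atTop (nhds 0) := by
  have hc : ContinuousAt (fun t : ℝ => t / (t ^ 2 + 1)) 0 := by
    apply ContinuousAt.div continuousAt_id (by fun_prop); norm_num
  have h2 := hc.tendsto.comp tendsto_inv_atTop_zero
  simp only [Function.comp_def] at h2
  norm_num at h2
  refine h2.congr' ?_
  filter_upwards [eventually_gt_atTop (0:ℝ)] with x hx
  have hx0 : x ≠ 0 := ne_of_gt hx
  field_simp

lemma tendsto_ratfun_bot : Tendsto (fun x : ℝ => x / (1 + x ^ 2)) atBot (nhds 0) := by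
  have h := (tendsto_ratfun_top.comp tendsto_neg_atBot_atTop).neg
  simp only [Function.comp] at h
  norm_num at h
  exact h.congr fun x => by ring_nf

lemma int_sq_inv : ∫ x : ℝ, ((1 + x ^ 2)⁻¹) ^ 2 = π / 2 := by
  have hd : ∀ x : ℝ, HasDerivAt (fun x : ℝ => (x / (1 + x ^ 2) + Real.arctan x) / 2)
      (((1 + x ^ 2)⁻¹) ^ 2) x := by
    intro x
    have h1 : (1:ℝ) + x ^ 2 ≠ 0 := by positivity
    have hdiv : HasDerivAt (fun x : ℝ => x / (1 + x ^ 2))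
        ((1 * (1 + x ^ 2) - x * (2 * x ^ 1)) / (1 + x ^ 2) ^ 2) x :=
      (hasDerivAt_id x).div ((hasDerivAt_pow 2 x).const_add 1) h1
    have := (hdiv.add (Real.hasDerivAt_arctan x)).div_const 2
    refine this.congr_deriv ?_
    field_simp
    ring
  have htop : Tendsto (fun x : ℝ => (x / (1 + x ^ 2) + Real.arctan x) / 2) atTop
      (nhds ((0 + π / 2) / 2)) :=
    (tendsto_ratfun_top.add
      (Real.tendsto_arctan_atTop.mono_right nhdsWithin_le_nhds)).div_const 2
  have hbot : Tendsto (fun x : ℝ => (x / (1 + x ^ 2) + Real.arctan x) / 2) atBot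
      (nhds ((0 + -(π / 2)) / 2)) :=
    (tendsto_ratfun_bot.add
      (Real.tendsto_arctan_atBot.mono_right nhdsWithin_le_nhds)).div_const 2
  have := integral_of_hasDerivAt_of_tendsto hd integrable_sq_inv hbot htop
  rw [this]; ring

lemma tendsto_ratfun2_top : Tendsto
    (fun x : ℝ => (x ^ 5 / 16 + x ^ 3 / 6 - x / 16) / (1 + x ^ 2) ^ 3) atTop (nhds 0) := by
  have hc : ContinuousAt (fun t : ℝ => (t / 16 + t ^ 3 / 6 - t ^ 5 / 16) / ((t ^ 2 + 1) ^ 3)) 0 := by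
    apply ContinuousAt.div (by fun_prop) (by fun_prop); norm_num
  have h2 := hc.tendsto.comp tendsto_inv_atTop_zero
  simp only [Function.comp_def] at h2
  norm_num at h2
  refine h2.congr' ?_
  filter_upwards [eventually_gt_atTop (0:ℝ)] with x hx
  have hx0 : x ≠ 0 := ne_of_gt hx
  field_simp

lemma tendsto_ratfun2_bot : Tendsto
    (fun x : ℝ => (x ^ 5 / 16 + x ^ 3 / 6 - x / 16) / (1 + x ^ 2) ^ 3) atBot (nhds 0) := by
  have h := (tendsto_ratfun2_top.comp tendsto_neg_atBot_atTop).neg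
  simp only [Function.comp] at h
  norm_num at h
  exact h.congr fun x => by ring_nf

lemma int_x2_inv4 : ∫ x : ℝ, x ^ 2 * ((1 + x ^ 2)⁻¹) ^ 4 = π / 16 := by
  have hd : ∀ x : ℝ, HasDerivAt
      (fun x : ℝ => (x ^ 5 / 16 + x ^ 3 / 6 - x / 16) / (1 + x ^ 2) ^ 3 + Real.arctan x / 16)
      (x ^ 2 * ((1 + x ^ 2)⁻¹) ^ 4) x := by
    intro x
    have h1 : ((1:ℝ) + x ^ 2) ^ 3 ≠ 0 := by positivity
    have hN : HasDerivAt (fun x : ℝ => x ^ 5 / 16 + x ^ 3 / 6 - x / 16)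
        ((5 * x ^ 4) / 16 + (3 * x ^ 2) / 6 - 1 / 16) x := by
      have := (((hasDerivAt_pow 5 x).div_const 16).add ((hasDerivAt_pow 3 x).div_const 6)).sub
        ((hasDerivAt_id x).div_const 16)
      refine this.congr_deriv ?_; norm_num
    have hD : HasDerivAt (fun x : ℝ => (1 + x ^ 2) ^ 3)
        (((3:ℕ) : ℝ) * (1 + x ^ 2) ^ 2 * (2 * x ^ 1)) x :=
      ((hasDerivAt_pow 2 x).const_add 1).fun_pow 3
    have := (hN.div hD h1).add ((Real.hasDerivAt_arctan x).div_const 16)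
    refine this.congr_deriv ?_
    have h2 : (1:ℝ) + x ^ 2 ≠ 0 := by positivity
    field_simp
    ring
  have htop : Tendsto
      (fun x : ℝ => (x ^ 5 / 16 + x ^ 3 / 6 - x / 16) / (1 + x ^ 2) ^ 3 + Real.arctan x / 16)
      atTop (nhds (0 + (π / 2) / 16)) :=
    tendsto_ratfun2_top.add
      ((Real.tendsto_arctan_atTop.mono_right nhdsWithin_le_nhds).div_const 16)
  have hbot : Tendsto
      (fun x : ℝ => (x ^ 5 / 16 + x ^ 3 / 6 - x / 16) / (1 + x ^ 2) ^ 3 + Real.arctan x / 16)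
      atBot (nhds (0 + (-(π / 2)) / 16)) :=
    tendsto_ratfun2_bot.add
      ((Real.tendsto_arctan_atBot.mono_right nhdsWithin_le_nhds).div_const 16)
  have := integral_of_hasDerivAt_of_tendsto hd integrable_x2_inv4 hbot htop
  rw [this]; ring

lemma rpow_helper (μ : ℝ) (hμ : 0 < μ) (n : ℕ) :
    (μ⁻¹) ^ n * Real.sqrt μ = μ ^ (-(n:ℝ) + 1/2) := by
  rw [Real.rpow_add hμ, Real.rpow_neg hμ.le, Real.rpow_natCast, ← Real.sqrt_eq_rpow, inv_pow]

lemma int_J2 (μ : ℝ) (hμ : 0 < μ) :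
    ∫ ξ : ℝ, ((μ + ξ ^ 2)⁻¹) ^ 2 = π / 2 * μ ^ (-(3:ℝ)/2) := by
  have hs : (0:ℝ) < Real.sqrt μ := Real.sqrt_pos.mpr hμ
  have key : ∀ ξ : ℝ, ((μ + ξ ^ 2)⁻¹) ^ 2
      = (μ⁻¹) ^ 2 * ((fun t : ℝ => ((1 + t ^ 2)⁻¹) ^ 2) (ξ / Real.sqrt μ)) := by
    intro ξ
    have h1 : (ξ / Real.sqrt μ) ^ 2 = ξ ^ 2 / μ := by
      rw [div_pow, Real.sq_sqrt hμ.le]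
    simp only [h1]
    have h2 : (0:ℝ) < μ + ξ ^ 2 := by positivity
    field_simp
  rw [integral_congr_ae (Eventually.of_forall key), integral_const_mul,
    MeasureTheory.Measure.integral_comp_div (fun t : ℝ => ((1 + t ^ 2)⁻¹) ^ 2) (Real.sqrt μ),
    int_sq_inv, abs_of_pos hs, smul_eq_mul]
  rw [show (μ⁻¹) ^ 2 * (Real.sqrt μ * (π / 2)) = (μ⁻¹) ^ 2 * Real.sqrt μ * (π/2) by ring,
    rpow_helper μ hμ 2]
  norm_num [mul_comm]

lemma int_J3 (μ : ℝ) (hμ : 0 < μ) :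
    ∫ ξ : ℝ, ξ ^ 2 * ((μ + ξ ^ 2)⁻¹) ^ 4 = π / 16 * μ ^ (-(5:ℝ)/2) := by
  have hs : (0:ℝ) < Real.sqrt μ := Real.sqrt_pos.mpr hμ
  have key : ∀ ξ : ℝ, ξ ^ 2 * ((μ + ξ ^ 2)⁻¹) ^ 4
      = (μ⁻¹) ^ 3 * ((fun t : ℝ => t ^ 2 * ((1 + t ^ 2)⁻¹) ^ 4) (ξ / Real.sqrt μ)) := by
    intro ξ
    have h1 : (ξ / Real.sqrt μ) ^ 2 = ξ ^ 2 / μ := by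
      rw [div_pow, Real.sq_sqrt hμ.le]
    simp only [h1]
    have h2 : (0:ℝ) < μ + ξ ^ 2 := by positivity
    field_simp
  rw [integral_congr_ae (Eventually.of_forall key), integral_const_mul,
    MeasureTheory.Measure.integral_comp_div (fun t : ℝ => t ^ 2 * ((1 + t ^ 2)⁻¹) ^ 4) (Real.sqrt μ),
    int_x2_inv4, abs_of_pos hs, smul_eq_mul]
  rw [show (μ⁻¹) ^ 3 * (Real.sqrt μ * (π / 16)) = (μ⁻¹) ^ 3 * Real.sqrt μ * (π/16) by ring,
    rpow_helper μ hμ 3]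
  norm_num [mul_comm]

lemma int_J1 (μ a : ℝ) (hμ : 0 < μ) :
    (∫ y in Set.Ioi (1:ℝ), (y - 1) ^ (a/2 - 1/4) / y ^ 2)
      = 2 * μ ^ ((5:ℝ)/4 - a/2) *
        ∫ ξ in Set.Ioi (0:ℝ), ξ ^ (a + 1/2) * ((μ + ξ ^ 2) ^ 2)⁻¹ := by
  have himg : (fun ξ : ℝ => 1 + ξ ^ 2 / μ) '' Set.Ioi 0 = Set.Ioi 1 := by
    ext y
    constructor
    · rintro ⟨ξ, hξ, rfl⟩
      have : 0 < ξ ^ 2 / μ := by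
        have : (0:ℝ) < ξ := hξ
        positivity
      simp only [Set.mem_Ioi]
      linarith
    · intro hy
      have hy1 : (0:ℝ) < μ * (y - 1) := by
        have : (1:ℝ) < y := hy
        nlinarith
      refine ⟨Real.sqrt (μ * (y - 1)), Real.sqrt_pos.mpr hy1, ?_⟩
      simp only
      rw [Real.sq_sqrt hy1.le]
      field_simp
      ring
  have hderiv : ∀ ξ ∈ Set.Ioi (0:ℝ),
      HasDerivWithinAt (fun ξ : ℝ => 1 + ξ ^ 2 / μ) (2 * ξ / μ) (Set.Ioi 0) ξ := by
    intro ξ _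
    have h : HasDerivAt (fun ξ : ℝ => 1 + ξ ^ 2 / μ) (2 * ξ ^ 1 / μ) ξ :=
      ((hasDerivAt_pow 2 ξ).div_const μ).const_add 1
    simpa using h.hasDerivWithinAt
  have hinj : Set.InjOn (fun ξ : ℝ => 1 + ξ ^ 2 / μ) (Set.Ioi 0) := by
    intro p hp q hq h
    simp only at h
    have hp' : (0:ℝ) < p := hp
    have hq' : (0:ℝ) < q := hq
    field_simp at h
    exact (pow_left_inj₀ hp'.le hq'.le two_ne_zero).mp (by linarith)
  have := integral_image_eq_integral_abs_deriv_smul measurableSet_Ioi hderiv hinj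
    (fun y => (y - 1) ^ (a/2 - 1/4) / y ^ 2)
  rw [himg] at this
  rw [this]
  rw [← integral_const_mul]
  refine setIntegral_congr_fun measurableSet_Ioi (fun ξ hξ => ?_)
  have hξ0 : (0:ℝ) < ξ := hξ
  have hA : (0:ℝ) < μ + ξ ^ 2 := by positivity
  simp only [smul_eq_mul, add_sub_cancel_left]
  rw [abs_of_pos (by positivity : (0:ℝ) < 2 * ξ / μ)]
  have e1 : (ξ ^ 2 / μ) ^ (a/2 - 1/4) = ξ ^ (a - 1/2) * (μ ^ (a/2 - 1/4))⁻¹ := by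
    rw [Real.div_rpow (sq_nonneg ξ) hμ.le]
    rw [← Real.rpow_natCast ξ 2, ← Real.rpow_mul hξ0.le]
    rw [div_eq_mul_inv]
    congr 2
    push_cast
    ring
  have e2 : (1 + ξ ^ 2 / μ) = (μ + ξ ^ 2) / μ := by field_simp
  have e3 : ξ ^ (a + 1/2) = ξ * ξ ^ (a - 1/2) := by
    rw [show a + 1/2 = 1 + (a - 1/2) by ring, Real.rpow_add hξ0, Real.rpow_one]
  have hrel : μ ^ ((5:ℝ)/4 - a/2) * μ ^ (a/2 - 1/4) = μ := by
    rw [← Real.rpow_add hμ]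
    norm_num
  rw [e1, e2, e3]
  set P := μ ^ (a/2 - 1/4) with hP
  set Q := μ ^ ((5:ℝ)/4 - a/2) with hQ
  have hPpos : 0 < P := Real.rpow_pos_of_pos hμ _
  have hQeq : Q = μ / P := by
    field_simp
    linarith [hrel]
  rw [hQeq]
  field_simp

lemma int_J1_full (μ a : ℝ) :
    ∫ ξ : ℝ, |ξ| ^ (a + 1/2) * ((μ + ξ ^ 2) ^ 2)⁻¹
      = 2 * ∫ ξ in Set.Ioi (0:ℝ), ξ ^ (a + 1/2) * ((μ + ξ ^ 2) ^ 2)⁻¹ := by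
  rw [← integral_comp_abs (f := fun t : ℝ => t ^ (a + 1/2) * ((μ + t ^ 2) ^ 2)⁻¹)]
  congr 1
  ext x
  rw [sq_abs]

lemma w1_key (μ : ℝ) (hμ : 0 < μ) (ξ : ℝ) : ((μ + ξ ^ 2)⁻¹) ^ 2
    = (μ⁻¹) ^ 2 * ((fun t : ℝ => ((1 + t ^ 2)⁻¹) ^ 2) (ξ / Real.sqrt μ)) := by
  have h1 : (ξ / Real.sqrt μ) ^ 2 = ξ ^ 2 / μ := by
    rw [div_pow, Real.sq_sqrt hμ.le]
  simp only [h1]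
  have h2 : (0:ℝ) < μ + ξ ^ 2 := by positivity
  field_simp

lemma w2_key (μ : ℝ) (hμ : 0 < μ) (ξ : ℝ) : ξ ^ 2 * ((μ + ξ ^ 2)⁻¹) ^ 4
    = (μ⁻¹) ^ 3 * ((fun t : ℝ => t ^ 2 * ((1 + t ^ 2)⁻¹) ^ 4) (ξ / Real.sqrt μ)) := by
  have h1 : (ξ / Real.sqrt μ) ^ 2 = ξ ^ 2 / μ := by
    rw [div_pow, Real.sq_sqrt hμ.le]
  simp only [h1]
  have h2 : (0:ℝ) < μ + ξ ^ 2 := by positivity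
  field_simp

lemma integrable_w1sq (μ : ℝ) (hμ : 0 < μ) :
    Integrable (fun ξ : ℝ => ((μ + ξ ^ 2)⁻¹) ^ 2) := by
  have hs : Real.sqrt μ ≠ 0 := ne_of_gt (Real.sqrt_pos.mpr hμ)
  exact ((integrable_sq_inv.comp_div hs).const_mul ((μ⁻¹) ^ 2)).congr
    (Eventually.of_forall fun ξ => (w1_key μ hμ ξ).symm)

lemma integrable_w2sq (μ : ℝ) (hμ : 0 < μ) :
    Integrable (fun ξ : ℝ => ξ ^ 2 * ((μ + ξ ^ 2)⁻¹) ^ 4) := by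
  have hs : Real.sqrt μ ≠ 0 := ne_of_gt (Real.sqrt_pos.mpr hμ)
  exact ((integrable_x2_inv4.comp_div hs).const_mul ((μ⁻¹) ^ 3)).congr
    (Eventually.of_forall fun ξ => (w2_key μ hμ ξ).symm)

lemma cs_int (w g : ℝ → ℝ) (hw : AEStronglyMeasurable w volume)
    (hg : AEStronglyMeasurable g volume)
    (hwn : ∀ x, 0 ≤ w x) (hgn : ∀ x, 0 ≤ g x)
    (hw2 : Integrable (fun x => w x ^ 2)) (hg2 : Integrable (fun x => g x ^ 2)) :
    ∫ x : ℝ, w x * g x ≤ Real.sqrt (∫ x : ℝ, w x ^ 2) * Real.sqrt (∫ x : ℝ, g x ^ 2) := by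
  have hpq : Real.HolderConjugate 2 2 := Real.HolderConjugate.two_two
  have h2 : (ENNReal.ofReal 2) = 2 := by
    rw [show (2:ℝ) = ((2:ℕ):ℝ) by norm_num, ENNReal.ofReal_natCast]
    norm_num
  have hwm : MemLp w (ENNReal.ofReal 2) := by
    rw [h2]; exact (memLp_two_iff_integrable_sq hw).mpr hw2
  have hgm : MemLp g (ENNReal.ofReal 2) := by
    rw [h2]; exact (memLp_two_iff_integrable_sq hg).mpr hg2
  have := integral_mul_le_Lp_mul_Lq_of_nonneg hpq (Eventually.of_forall hwn)
    (Eventually.of_forall hgn) hwm hgm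
  have e : ∀ x : ℝ, x ^ (2:ℝ) = x ^ 2 := fun x => by
    rw [show (2:ℝ) = ((2:ℕ):ℝ) by norm_num, Real.rpow_natCast]
  simp only [e] at this
  rw [Real.sqrt_eq_rpow, Real.sqrt_eq_rpow]
  convert this using 3 <;> norm_num

lemma sqrt_J2 (μ : ℝ) (hμ : 0 < μ) :
    Real.sqrt (π / 2 * μ ^ (-(3:ℝ)/2)) = Real.sqrt (π / 2) * μ ^ (-(3:ℝ)/4) := by
  rw [Real.sqrt_mul (by positivity : (0:ℝ) ≤ π / 2)]
  congr 1
  rw [Real.sqrt_eq_rpow, ← Real.rpow_mul hμ.le]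
  norm_num

lemma sqrt_J3 (μ : ℝ) (hμ : 0 < μ) :
    Real.sqrt (π / 16 * μ ^ (-(5:ℝ)/2)) = Real.sqrt π / 4 * μ ^ (-(5:ℝ)/4) := by
  rw [Real.sqrt_mul (by positivity : (0:ℝ) ≤ π / 16)]
  congr 1
  · have h16 : Real.sqrt 16 = 4 := by
      rw [show (16:ℝ) = 4 ^ 2 by norm_num, Real.sqrt_sq (by norm_num : (0:ℝ) ≤ 4)]
    rw [Real.sqrt_div pi_pos.le 16, h16]
  · rw [Real.sqrt_eq_rpow, ← Real.rpow_mul hμ.le]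
    norm_num

theorem statement15 (α η lam : ℝ) (hα0 : 0 < α) (hα1 : α < 1) (hη : 0 ≤ η)
    (hpos : 0 < |lam| + η) (V : ℂ) (f φ : ℝ → ℂ)
    (hmeasφ : Measurable φ) (hmeasf : Measurable f)
    (hφ : Integrable (fun ξ : ℝ => ‖(ξ : ℂ) * φ ξ‖ ^ 2))
    (hf : Integrable (fun ξ : ℝ => ‖f ξ‖ ^ 2))
    (hineq : ∀ᵐ ξ : ℝ, |ξ| ^ ((2 * α - 1) / 2) * ‖V‖ ≤
      (|lam| + ξ ^ 2 + η) * ‖φ ξ‖ + ‖f ξ‖) :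
    (∫ y in Set.Ioi (1 : ℝ), (y - 1) ^ (α / 2 - 1 / 4) / y ^ 2) *
        (|lam| + η) ^ (α / 2 - 5 / 4) * ‖V‖ ≤
      Real.sqrt (Real.pi / 2) * (|lam| + η) ^ (-(3 : ℝ) / 4) *
          Real.sqrt (∫ ξ : ℝ, ‖(ξ : ℂ) * φ ξ‖ ^ 2) +
        Real.sqrt Real.pi / 4 * (|lam| + η) ^ (-(5 : ℝ) / 4) *
          Real.sqrt (∫ ξ : ℝ, ‖f ξ‖ ^ 2) := by
  set μ : ℝ := |lam| + η with hμdef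
  have hμ : 0 < μ := hpos
  -- the functions
  set w₁ : ℝ → ℝ := fun ξ => (μ + ξ ^ 2)⁻¹ with hw₁def
  set w₂ : ℝ → ℝ := fun ξ => |ξ| * ((μ + ξ ^ 2) ^ 2)⁻¹ with hw₂def
  set g₁ : ℝ → ℝ := fun ξ => ‖(ξ : ℂ) * φ ξ‖ with hg₁def
  set g₂ : ℝ → ℝ := fun ξ => ‖f ξ‖ with hg₂def
  have hApos : ∀ ξ : ℝ, (0:ℝ) < μ + ξ ^ 2 := fun ξ => by positivity
  have hw₁m : Continuous w₁ := Continuous.inv₀ (by continuity) fun ξ => ne_of_gt (hApos ξ)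
  have hw₂m : Continuous w₂ := continuous_abs.mul
    ((Continuous.inv₀ (by continuity) fun ξ => by positivity))
  have hg₁m : AEStronglyMeasurable g₁ volume :=
    ((Complex.measurable_ofReal.mul hmeasφ).norm).aestronglyMeasurable
  have hg₂m : AEStronglyMeasurable g₂ volume := hmeasf.norm.aestronglyMeasurable
  have hw₁n : ∀ ξ, 0 ≤ w₁ ξ := fun ξ => by positivity
  have hw₂n : ∀ ξ, 0 ≤ w₂ ξ := fun ξ => by positivity
  have hg₁n : ∀ ξ, 0 ≤ g₁ ξ := fun ξ => norm_nonneg _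
  have hg₂n : ∀ ξ, 0 ≤ g₂ ξ := fun ξ => norm_nonneg _
  -- square integrability of the weights
  have hw₁sq : Integrable (fun ξ : ℝ => w₁ ξ ^ 2) := integrable_w1sq μ hμ
  have hw₂sq : Integrable (fun ξ : ℝ => w₂ ξ ^ 2) := by
    refine (integrable_w2sq μ hμ).congr (Eventually.of_forall fun ξ => ?_)
    simp only [hw₂def, mul_pow, sq_abs, ← inv_pow, ← pow_mul]
  -- integrability of products
  have hprod : ∀ (w g : ℝ → ℝ), AEStronglyMeasurable w volume →
      AEStronglyMeasurable g volume → (∀ x, 0 ≤ w x) → (∀ x, 0 ≤ g x) →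
      Integrable (fun ξ => w ξ ^ 2) → Integrable (fun ξ => g ξ ^ 2) →
      Integrable (fun ξ => w ξ * g ξ) := by
    intro w g hwm hgm hwn hgn hw2 hg2
    refine ((hw2.add hg2).div_const 2).mono' (hwm.mul hgm) ?_
    filter_upwards with ξ
    simp only [Pi.add_apply]
    rw [Real.norm_eq_abs, abs_of_nonneg (mul_nonneg (hwn ξ) (hgn ξ))]
    nlinarith [sq_nonneg (w ξ - g ξ)]
  have hint1 : Integrable (fun ξ => w₁ ξ * g₁ ξ) :=
    hprod w₁ g₁ hw₁m.aestronglyMeasurable hg₁m hw₁n hg₁n hw₁sq hφ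
  have hint2 : Integrable (fun ξ => w₂ ξ * g₂ ξ) :=
    hprod w₂ g₂ hw₂m.aestronglyMeasurable hg₂m hw₂n hg₂n hw₂sq hf
  -- pointwise inequality after multiplying by the weight
  have h0 : ∀ᵐ ξ : ℝ, ξ ≠ (0:ℝ) := by
    have hset : {a : ℝ | ¬ a ≠ 0} = {0} := by ext x; simp
    rw [ae_iff, hset]
    exact measure_singleton 0
  have hpt : ∀ᵐ ξ : ℝ, |ξ| ^ (α + 1/2) * ((μ + ξ ^ 2) ^ 2)⁻¹ * ‖V‖
      ≤ w₁ ξ * g₁ ξ + w₂ ξ * g₂ ξ := by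
    filter_upwards [hineq, h0] with ξ h1 h2
    have habs : (0:ℝ) < |ξ| := abs_pos.mpr h2
    have hw : (0:ℝ) ≤ |ξ| * ((μ + ξ ^ 2) ^ 2)⁻¹ := by positivity
    have key := mul_le_mul_of_nonneg_right h1 hw
    have eabs : |ξ| ^ (α + 1/2) = |ξ| ^ ((2 * α - 1) / 2) * |ξ| := by
      rw [show α + 1/2 = (2 * α - 1) / 2 + 1 by ring, Real.rpow_add habs, Real.rpow_one]
    have enorm : g₁ ξ = |ξ| * ‖φ ξ‖ := by
      rw [hg₁def]; simp only [norm_mul, Complex.norm_real, Real.norm_eq_abs]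
    have elam : |lam| + ξ ^ 2 + η = μ + ξ ^ 2 := by rw [hμdef]; ring
    calc |ξ| ^ (α + 1/2) * ((μ + ξ ^ 2) ^ 2)⁻¹ * ‖V‖
        = |ξ| ^ ((2 * α - 1) / 2) * ‖V‖ * (|ξ| * ((μ + ξ ^ 2) ^ 2)⁻¹) := by
          rw [eabs]; ring
      _ ≤ ((|lam| + ξ ^ 2 + η) * ‖φ ξ‖ + ‖f ξ‖) * (|ξ| * ((μ + ξ ^ 2) ^ 2)⁻¹) := key
      _ = w₁ ξ * g₁ ξ + w₂ ξ * g₂ ξ := by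
          rw [elam, enorm, hw₁def, hw₂def, hg₂def]
          have hA := hApos ξ
          field_simp
  -- evaluate the LHS integral
  have hLHS : (∫ y in Set.Ioi (1:ℝ), (y - 1) ^ (α / 2 - 1 / 4) / y ^ 2) * μ ^ (α / 2 - 5 / 4)
      = ∫ ξ : ℝ, |ξ| ^ (α + 1/2) * ((μ + ξ ^ 2) ^ 2)⁻¹ := by
    rw [int_J1 μ α hμ, int_J1_full μ α]
    rw [show 2 * μ ^ ((5:ℝ)/4 - α/2) * (∫ ξ in Set.Ioi (0:ℝ), ξ ^ (α + 1/2) * ((μ + ξ ^ 2) ^ 2)⁻¹)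
        * μ ^ (α / 2 - 5 / 4) = (μ ^ ((5:ℝ)/4 - α/2) * μ ^ (α / 2 - 5 / 4)) *
        (2 * ∫ ξ in Set.Ioi (0:ℝ), ξ ^ (α + 1/2) * ((μ + ξ ^ 2) ^ 2)⁻¹) by ring]
    rw [← Real.rpow_add hμ]
    norm_num
  -- Cauchy-Schwarz on both terms
  have hcs1 : ∫ ξ : ℝ, w₁ ξ * g₁ ξ ≤
      Real.sqrt (π / 2) * μ ^ (-(3:ℝ)/4) * Real.sqrt (∫ ξ : ℝ, ‖(ξ : ℂ) * φ ξ‖ ^ 2) := by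
    have h := cs_int w₁ g₁ hw₁m.aestronglyMeasurable hg₁m hw₁n hg₁n hw₁sq hφ
    rwa [show (∫ x : ℝ, w₁ x ^ 2) = π / 2 * μ ^ (-(3:ℝ)/2) from int_J2 μ hμ,
      sqrt_J2 μ hμ] at h
  have hcs2 : ∫ ξ : ℝ, w₂ ξ * g₂ ξ ≤
      Real.sqrt π / 4 * μ ^ (-(5:ℝ)/4) * Real.sqrt (∫ ξ : ℝ, ‖f ξ‖ ^ 2) := by
    have h := cs_int w₂ g₂ hw₂m.aestronglyMeasurable hg₂m hw₂n hg₂n hw₂sq hf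
    have hval : (∫ x : ℝ, w₂ x ^ 2) = π / 16 * μ ^ (-(5:ℝ)/2) := by
      rw [← int_J3 μ hμ]
      refine integral_congr_ae (Eventually.of_forall fun ξ => ?_)
      simp only [hw₂def, mul_pow, sq_abs, ← inv_pow, ← pow_mul]
    rwa [hval, sqrt_J3 μ hμ] at h
  -- put everything together
  calc (∫ y in Set.Ioi (1:ℝ), (y - 1) ^ (α / 2 - 1 / 4) / y ^ 2) * μ ^ (α / 2 - 5 / 4) * ‖V‖
      = ∫ ξ : ℝ, |ξ| ^ (α + 1/2) * ((μ + ξ ^ 2) ^ 2)⁻¹ * ‖V‖ := by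
        rw [integral_mul_const, ← hLHS]
    _ ≤ ∫ ξ : ℝ, (w₁ ξ * g₁ ξ + w₂ ξ * g₂ ξ) := by
        refine integral_mono_of_nonneg ?_ (hint1.add hint2) hpt
        filter_upwards with ξ
        positivity
    _ = (∫ ξ : ℝ, w₁ ξ * g₁ ξ) + ∫ ξ : ℝ, w₂ ξ * g₂ ξ := integral_add hint1 hint2
    _ ≤ _ := add_le_add hcs1 hcs2
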